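/- Let (Ω, 𝔉, μ) be a probability space, let Gₙ, G₀ : Ω → ℝ^d be Bochner square-integrable random vectors, and let W : Ω → ℝ be a square-integrable random variable. Let θₙ, θ⁰, u ∈ ℝ^d be fixed vectors, η > 0, and A, C_w, C_g ≥ 0 constants such that: (i) ∫ ‖Gₙ − G₀‖² dμ ≤ A·‖θₙ − θ⁰‖²; (ii) ‖G₀(ω)‖ ≤ C_g for μ-almost every ω; (iii) ∫ (1 − W)² dμ ≤ C_w·‖θₙ − θ⁰‖². Define Jₙ := ∫ Gₙ dμ, J₀ := ∫ W·G₀ dμ, e := u − J₀, and v := Gₙ − W·G₀ + u. Then ∫ ‖θₙ + η·v − θ⁰‖² dμ ≤ [1 + η²·(2A + 2C_g²·C_w)]·‖θₙ − θ⁰‖² + 2η·⟨Jₙ, θₙ − θ⁰⟩ + 2η·⟨e, θₙ − θ⁰⟩ + 2η²·‖Jₙ‖² + 2η²·‖e‖². -/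

import Mathlib

open MeasureTheory RealInnerProductSpace

set_option maxHeartbeats 2000000 in
/-- Single-step expansion of the expected squared distance to the snapshot
parameter after one semi-stochastic gradient step (paper's equation B.5-1). -/
theorem one_step_distance_expansion
    {Ω : Type*} [MeasurableSpace Ω] (μ : Measure Ω) [IsProbabilityMeasure μ]
    {d : ℕ} (Gn G0 : Ω → EuclideanSpace ℝ (Fin d)) (W : Ω → ℝ)
    (hGn : MemLp Gn 2 μ) (hG0 : MemLp G0 2 μ) (hW : MemLp W 2 μ)
    (θn θ0 u : EuclideanSpace ℝ (Fin d)) (η : ℝ) (hη : 0 < η) (A Cw Cg : ℝ)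
    (hA : 0 ≤ A) (hCw : 0 ≤ Cw) (hCg : 0 ≤ Cg)
    (h1 : ∫ ω, ‖Gn ω - G0 ω‖ ^ 2 ∂μ ≤ A * ‖θn - θ0‖ ^ 2)
    (h2 : ∀ᵐ ω ∂μ, ‖G0 ω‖ ≤ Cg)
    (h3 : ∫ ω, (1 - W ω) ^ 2 ∂μ ≤ Cw * ‖θn - θ0‖ ^ 2) :
    ∫ ω, ‖θn + η • (Gn ω - W ω • G0 ω + u) - θ0‖ ^ 2 ∂μ ≤
      (1 + η ^ 2 * (2 * A + 2 * Cg ^ 2 * Cw)) * ‖θn - θ0‖ ^ 2 +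
        2 * η * ⟪∫ ω, Gn ω ∂μ, θn - θ0⟫ +
        2 * η * ⟪u - ∫ ω, W ω • G0 ω ∂μ, θn - θ0⟫ +
        2 * η ^ 2 * ‖∫ ω, Gn ω ∂μ‖ ^ 2 +
        2 * η ^ 2 * ‖u - ∫ ω, W ω • G0 ω ∂μ‖ ^ 2 := by
  set δ : EuclideanSpace ℝ (Fin d) := θn - θ0 with hδ
  -- integrability facts
  have hWG0 : MemLp (fun ω => W ω • G0 ω) 2 μ := by
    refine MemLp.of_le (hW.const_mul Cg) (hW.aestronglyMeasurable.smul hG0.aestronglyMeasurable) ?_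
    filter_upwards [h2] with ω hω
    rw [norm_smul, Real.norm_eq_abs, Real.norm_eq_abs, abs_mul, abs_of_nonneg hCg]
    calc |W ω| * ‖G0 ω‖ ≤ |W ω| * Cg := mul_le_mul_of_nonneg_left hω (abs_nonneg _)
      _ = Cg * |W ω| := mul_comm _ _
  have hX : MemLp (fun ω => Gn ω - W ω • G0 ω + u) 2 μ :=
    (hGn.sub hWG0).add (memLp_const u)
  have hXi : Integrable (fun ω => Gn ω - W ω • G0 ω + u) μ := hX.integrable one_le_two
  have hGni : Integrable Gn μ := hGn.integrable one_le_two
  have hWG0i : Integrable (fun ω => W ω • G0 ω) μ := hWG0.integrable one_le_two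
  have hXu : MemLp (fun ω => Gn ω - W ω • G0 ω) 2 μ := hGn.sub hWG0
  have hXui : Integrable (fun ω => Gn ω - W ω • G0 ω) μ := hXu.integrable one_le_two
  -- the mean of the update direction
  have hmean : (∫ ω, (Gn ω - W ω • G0 ω + u) ∂μ)
      = (∫ ω, Gn ω ∂μ) + (u - ∫ ω, W ω • G0 ω ∂μ) := by
    rw [integral_add hXui (integrable_const u),
      integral_sub hGni hWG0i, integral_const]
    simp only [measure_univ, probReal_univ, ENNReal.toReal_one, one_smul]
    abel
  set m : EuclideanSpace ℝ (Fin d) := ∫ ω, (Gn ω - W ω • G0 ω + u) ∂μ with hm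
  -- pointwise expansion
  have hpt : ∀ ω, ‖θn + η • (Gn ω - W ω • G0 ω + u) - θ0‖ ^ 2
      = ‖δ‖ ^ 2 + 2 * η * ⟪δ, Gn ω - W ω • G0 ω + u⟫
        + η ^ 2 * ‖Gn ω - W ω • G0 ω + u‖ ^ 2 := by
    intro ω
    have h : θn + η • (Gn ω - W ω • G0 ω + u) - θ0
        = δ + η • (Gn ω - W ω • G0 ω + u) := by rw [hδ]; abel
    rw [h, norm_add_sq_real, real_inner_smul_right, norm_smul, Real.norm_eq_abs,
      mul_pow, sq_abs]
    ring
  have hi1 : Integrable (fun ω => 2 * η * ⟪δ, Gn ω - W ω • G0 ω + u⟫) μ :=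
    (hXi.const_inner δ).const_mul (2 * η)
  have hi2 : Integrable (fun ω => ‖Gn ω - W ω • G0 ω + u‖ ^ 2) μ := hX.norm.integrable_sq
  -- the key identity for the LHS
  have key : ∫ ω, ‖θn + η • (Gn ω - W ω • G0 ω + u) - θ0‖ ^ 2 ∂μ
      = ‖δ‖ ^ 2 + 2 * η * ⟪δ, m⟫
        + η ^ 2 * ∫ ω, ‖Gn ω - W ω • G0 ω + u‖ ^ 2 ∂μ := by
    simp only [hpt]
    rw [integral_add (f := fun ω => ‖δ‖ ^ 2 + 2 * η * ⟪δ, Gn ω - W ω • G0 ω + u⟫)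
        (g := fun ω => η ^ 2 * ‖Gn ω - W ω • G0 ω + u‖ ^ 2)
        ((integrable_const _).add hi1) (hi2.const_mul (η ^ 2)),
      integral_add (f := fun _ => ‖δ‖ ^ 2)
        (g := fun ω => 2 * η * ⟪δ, Gn ω - W ω • G0 ω + u⟫)
        (integrable_const _) hi1,
      integral_const, integral_const_mul, integral_const_mul,
      integral_inner hXi δ]
    simp only [measure_univ, probReal_univ, ENNReal.toReal_one, smul_eq_mul, one_mul]
    rfl
  -- variance bound: ∫‖X‖² ≤ ∫‖X - u‖² + ‖m‖²
  have hvar : ∫ ω, ‖Gn ω - W ω • G0 ω + u‖ ^ 2 ∂μ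
      ≤ (∫ ω, ‖Gn ω - W ω • G0 ω‖ ^ 2 ∂μ) + ‖m‖ ^ 2 := by
    have hexp : ∀ ω, ‖Gn ω - W ω • G0 ω + u‖ ^ 2
        = ‖Gn ω - W ω • G0 ω‖ ^ 2 + (2 * ⟪u, Gn ω - W ω • G0 ω⟫ + ‖u‖ ^ 2) := by
      intro ω
      rw [norm_add_sq_real, real_inner_comm]
      ring
    simp only [hexp]
    rw [integral_add (f := fun ω => ‖Gn ω - W ω • G0 ω‖ ^ 2)
        (g := fun ω => 2 * ⟪u, Gn ω - W ω • G0 ω⟫ + ‖u‖ ^ 2)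
        hXu.norm.integrable_sq
        (((hXui.const_inner u).const_mul 2).add (integrable_const _)),
      integral_add (f := fun ω => 2 * ⟪u, Gn ω - W ω • G0 ω⟫) (g := fun _ => ‖u‖ ^ 2)
        ((hXui.const_inner u).const_mul 2) (integrable_const _),
      integral_const, integral_const_mul, integral_inner hXui u]
    simp only [measure_univ, probReal_univ, ENNReal.toReal_one, one_smul, smul_eq_mul, one_mul]
    have hmu : (∫ ω, (Gn ω - W ω • G0 ω) ∂μ) = m - u := by
      rw [hm, integral_add hXui (integrable_const u), integral_const]
      simp only [measure_univ, probReal_univ, ENNReal.toReal_one, one_smul]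
      abel
    rw [hmu]
    have hns : ‖m - u‖ ^ 2 = ‖m‖ ^ 2 - 2 * ⟪m, u⟫ + ‖u‖ ^ 2 := norm_sub_sq_real m u
    have hiu : ⟪u, m - u⟫ = ⟪u, m⟫ - ‖u‖ ^ 2 := by
      rw [inner_sub_right, real_inner_self_eq_norm_sq]
    have hcomm : ⟪u, m⟫ = ⟪m, u⟫ := real_inner_comm m u
    nlinarith [sq_nonneg ‖m - u‖]
  -- bound ∫‖X - u‖²
  have hiG : Integrable (fun ω => ‖Gn ω - G0 ω‖ ^ 2) μ := (hGn.sub hG0).norm.integrable_sq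
  have hiW : Integrable (fun ω => (1 - W ω) ^ 2) μ := ((memLp_const 1).sub hW).integrable_sq
  have hb : ∫ ω, ‖Gn ω - W ω • G0 ω‖ ^ 2 ∂μ
      ≤ 2 * (A * ‖δ‖ ^ 2) + 2 * Cg ^ 2 * (Cw * ‖δ‖ ^ 2) := by
    have hmono : ∫ ω, ‖Gn ω - W ω • G0 ω‖ ^ 2 ∂μ
        ≤ ∫ ω, (2 * ‖Gn ω - G0 ω‖ ^ 2 + 2 * Cg ^ 2 * (1 - W ω) ^ 2) ∂μ := by
      refine integral_mono_ae hXu.norm.integrable_sq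
        ((hiG.const_mul 2).add (hiW.const_mul (2 * Cg ^ 2))) ?_
      filter_upwards [h2] with ω hω
      have hsplit : Gn ω - W ω • G0 ω = (Gn ω - G0 ω) + (1 - W ω) • G0 ω := by
        rw [sub_smul, one_smul]; abel
      rw [hsplit]
      have htr : ‖(Gn ω - G0 ω) + (1 - W ω) • G0 ω‖ ^ 2
          ≤ (‖Gn ω - G0 ω‖ + ‖(1 - W ω) • G0 ω‖) ^ 2 :=
        pow_le_pow_left₀ (norm_nonneg _) (norm_add_le _ _) 2
      have h0 : ‖(1 - W ω) • G0 ω‖ ^ 2 ≤ Cg ^ 2 * (1 - W ω) ^ 2 := by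
        rw [norm_smul, Real.norm_eq_abs, mul_pow, sq_abs]
        have hg2 : ‖G0 ω‖ ^ 2 ≤ Cg ^ 2 :=
          pow_le_pow_left₀ (norm_nonneg _) hω 2
        rw [mul_comm (Cg ^ 2)]
        exact mul_le_mul_of_nonneg_left hg2 (sq_nonneg _)
      set a := ‖Gn ω - G0 ω‖ with ha
      set b := ‖(1 - W ω) • G0 ω‖ with hbdef
      nlinarith [sq_nonneg (a - b)]
    rw [integral_add (f := fun ω => 2 * ‖Gn ω - G0 ω‖ ^ 2)
        (g := fun ω => 2 * Cg ^ 2 * (1 - W ω) ^ 2)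
        (hiG.const_mul 2) (hiW.const_mul (2 * Cg ^ 2)),
      integral_const_mul, integral_const_mul] at hmono
    have h4 : 2 * Cg ^ 2 * ∫ ω, (1 - W ω) ^ 2 ∂μ ≤ 2 * Cg ^ 2 * (Cw * ‖δ‖ ^ 2) := by
      apply mul_le_mul_of_nonneg_left h3
      positivity
    have h5 : 2 * ∫ ω, ‖Gn ω - G0 ω‖ ^ 2 ∂μ ≤ 2 * (A * ‖δ‖ ^ 2) := by linarith
    linarith
  -- bound ‖m‖²
  have hm2 : ‖m‖ ^ 2 ≤ 2 * ‖∫ ω, Gn ω ∂μ‖ ^ 2 + 2 * ‖u - ∫ ω, W ω • G0 ω ∂μ‖ ^ 2 := by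
    rw [hmean]
    nlinarith [norm_add_le (∫ ω, Gn ω ∂μ) (u - ∫ ω, W ω • G0 ω ∂μ),
      norm_nonneg (∫ ω, Gn ω ∂μ + (u - ∫ ω, W ω • G0 ω ∂μ)),
      sq_nonneg (‖∫ ω, Gn ω ∂μ‖ - ‖u - ∫ ω, W ω • G0 ω ∂μ‖)]
  have hinner : ⟪δ, m⟫ = ⟪∫ ω, Gn ω ∂μ, δ⟫ + ⟪u - ∫ ω, W ω • G0 ω ∂μ, δ⟫ := by
    rw [hmean, inner_add_right, real_inner_comm δ, real_inner_comm δ]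
  have hS : ∫ ω, ‖Gn ω - W ω • G0 ω + u‖ ^ 2 ∂μ
      ≤ (2 * A + 2 * Cg ^ 2 * Cw) * ‖δ‖ ^ 2
        + 2 * ‖∫ ω, Gn ω ∂μ‖ ^ 2 + 2 * ‖u - ∫ ω, W ω • G0 ω ∂μ‖ ^ 2 := by
    have : (2 * A + 2 * Cg ^ 2 * Cw) * ‖δ‖ ^ 2
        = 2 * (A * ‖δ‖ ^ 2) + 2 * Cg ^ 2 * (Cw * ‖δ‖ ^ 2) := by ring
    linarith
  have hη2 : (0:ℝ) ≤ η ^ 2 := sq_nonneg η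
  rw [key, hinner]
  calc ‖δ‖ ^ 2 + 2 * η * (⟪∫ ω, Gn ω ∂μ, δ⟫ + ⟪u - ∫ ω, W ω • G0 ω ∂μ, δ⟫)
        + η ^ 2 * ∫ ω, ‖Gn ω - W ω • G0 ω + u‖ ^ 2 ∂μ
      ≤ ‖δ‖ ^ 2 + 2 * η * (⟪∫ ω, Gn ω ∂μ, δ⟫ + ⟪u - ∫ ω, W ω • G0 ω ∂μ, δ⟫)
        + η ^ 2 * ((2 * A + 2 * Cg ^ 2 * Cw) * ‖δ‖ ^ 2
          + 2 * ‖∫ ω, Gn ω ∂μ‖ ^ 2 + 2 * ‖u - ∫ ω, W ω • G0 ω ∂μ‖ ^ 2) := by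
        have := mul_le_mul_of_nonneg_left hS hη2
        linarith
    _ = (1 + η ^ 2 * (2 * A + 2 * Cg ^ 2 * Cw)) * ‖δ‖ ^ 2 +
        2 * η * ⟪∫ ω, Gn ω ∂μ, δ⟫ +
        2 * η * ⟪u - ∫ ω, W ω • G0 ω ∂μ, δ⟫ +
        2 * η ^ 2 * ‖∫ ω, Gn ω ∂μ‖ ^ 2 +
        2 * η ^ 2 * ‖u - ∫ ω, W ω • G0 ω ∂μ‖ ^ 2 := by ring
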